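/- For n ≥ 6, the n-dimensional spined cube SQ_n is isomorphic to the 4-Cayley graph Γ_n of H = (Z/2)^{n-2}: explicitly, the map φ sending x_1⋯x_{n-2}00 ↦ (x,1), x_1⋯x_{n-2}01 ↦ (x,2), x_1⋯x_{n-2}11 ↦ (x,3), x_1⋯x_{n-2}10 ↦ (x,4), where x = (x_1,…,x_{n-2}) ∈ (Z/2)^{n-2}, is a graph isomorphism from SQ_n to Γ_n. -/
import Mathlib


/-- The "difference vector" of the neighbor rules of the spined cube, `i` being the
0-based index of the flipped bit. -/
def sqDelta (n : ℕ) (x : Fin n → ZMod 2) (i : Fin n) : Fin n → ZMod 2 :=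
  fun j =>
    (if j = i then 1 else 0) +
    (if i.val + 5 ≤ n then
      (if j.val = i.val + 1 then x ⟨n - 2, by have := i.isLt; omega⟩ else 0) +
      (if j.val = i.val + 2 then x ⟨n - 1, by have := i.isLt; omega⟩ else 0)
    else if n ≤ i.val + 2 then 0
    else (if j.val = i.val + 1 then x ⟨n - 1, by have := i.isLt; omega⟩ else 0))

/-- The `n`-dimensional spined cube `SQ_n`. -/
def spinedCube (n : ℕ) : SimpleGraph (Fin n → ZMod 2) :=
  SimpleGraph.fromRel (fun x y => ∃ i : Fin n, y = x + sqDelta n x i)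


/-- The 4-Cayley graph `Γ` of `H = (ℤ/2)^m` (with `m = n - 2`): vertices are the
four copies `H × {0,1,2,3}` of `H`, with `(h,i)` adjacent to `(g,j)` iff
`g - h ∈ T i j`, for the connection sets of Definition 3.2 of the paper
(the paper's labels `1,2,3,4` correspond to `0,1,2,3` here, and `aₖ` is the
`k`-th standard basis vector, 0-indexed). -/
def gammaGraph (m : ℕ) (hm : 4 ≤ m) : SimpleGraph ((Fin m → ZMod 2) × Fin 4) :=
  SimpleGraph.fromRel (fun p q =>
    (p.2 = 0 ∧ q.2 = 0 ∧ ∃ i : Fin m, q.1 - p.1 = Pi.single i 1) ∨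
    (p.2 = 1 ∧ q.2 = 1 ∧
      ((∃ i : Fin m, ∃ h : i.val + 3 ≤ m,
          q.1 - p.1 = Pi.single i 1 + Pi.single (⟨i.val + 2, by omega⟩ : Fin m) 1) ∨
        q.1 - p.1 = Pi.single (⟨m - 2, by omega⟩ : Fin m) 1 +
          Pi.single (⟨m - 1, by omega⟩ : Fin m) 1)) ∨
    (p.2 = 2 ∧ q.2 = 2 ∧
      ((∃ i : Fin m, ∃ h : i.val + 3 ≤ m,
          q.1 - p.1 = Pi.single i 1 + Pi.single (⟨i.val + 1, by omega⟩ : Fin m) 1 +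
            Pi.single (⟨i.val + 2, by omega⟩ : Fin m) 1) ∨
        q.1 - p.1 = Pi.single (⟨m - 2, by omega⟩ : Fin m) 1 +
          Pi.single (⟨m - 1, by omega⟩ : Fin m) 1)) ∨
    (p.2 = 3 ∧ q.2 = 3 ∧
      ((∃ i : Fin m, ∃ h : i.val + 3 ≤ m,
          q.1 - p.1 = Pi.single i 1 + Pi.single (⟨i.val + 1, by omega⟩ : Fin m) 1) ∨
        q.1 - p.1 = Pi.single (⟨m - 2, by omega⟩ : Fin m) 1 ∨
        q.1 - p.1 = Pi.single (⟨m - 1, by omega⟩ : Fin m) 1)) ∨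
    (p.2 = 0 ∧ q.2 = 1 ∧ q.1 = p.1) ∨
    (p.2 = 0 ∧ q.2 = 3 ∧ q.1 = p.1) ∨
    (p.2 = 2 ∧ q.2 = 3 ∧ q.1 = p.1) ∨
    (p.2 = 1 ∧ q.2 = 2 ∧
      (q.1 = p.1 ∨ q.1 - p.1 = Pi.single (⟨m - 1, by omega⟩ : Fin m) 1)))

namespace SCI

def lbl (a b : ZMod 2) : Fin 4 :=
  if a = 0 then (if b = 0 then 0 else 1) else (if b = 0 then 3 else 2)

def phi (m : ℕ) (x : Fin (m+2) → ZMod 2) : (Fin m → ZMod 2) × Fin 4 :=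
  (fun i => x (Fin.castLE (by omega) i), lbl (x ⟨m, by omega⟩) (x ⟨m+1, by omega⟩))

def psi (m : ℕ) (p : (Fin m → ZMod 2) × Fin 4) : Fin (m+2) → ZMod 2 :=
  fun j => if h : j.val < m then p.1 ⟨j.val, h⟩
    else if j.val = m then (if p.2 = 0 ∨ p.2 = 1 then 0 else 1)
    else (if p.2 = 0 ∨ p.2 = 3 then 0 else 1)

theorem z2 : ∀ a : ZMod 2, a = 0 ∨ a = 1 := by decide

lemma psi_lt (m : ℕ) (p : (Fin m → ZMod 2) × Fin 4) (k : Fin m) :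
    psi m p (Fin.castLE (by omega) k) = p.1 k := by
  simp only [psi, Fin.coe_castLE]
  rw [dif_pos k.isLt]

lemma psi_m (m : ℕ) (p : (Fin m → ZMod 2) × Fin 4) (h : m < m + 2) :
    psi m p ⟨m, h⟩ = (if p.2 = 0 ∨ p.2 = 1 then 0 else 1) := by
  simp only [psi]
  rw [dif_neg (by omega)]
  simp

lemma psi_m1 (m : ℕ) (p : (Fin m → ZMod 2) × Fin 4) (h : m + 1 < m + 2) :
    psi m p ⟨m + 1, h⟩ = (if p.2 = 0 ∨ p.2 = 3 then 0 else 1) := by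
  simp only [psi]
  rw [dif_neg (by omega), if_neg (by omega)]

def eqv (m : ℕ) : (Fin (m+2) → ZMod 2) ≃ ((Fin m → ZMod 2) × Fin 4) where
  toFun := phi m
  invFun := psi m
  left_inv := by
    intro x
    funext j
    by_cases h : j.val < m
    · have hj : j = Fin.castLE (by omega) (⟨j.val, h⟩ : Fin m) := by ext; rfl
      rw [hj, psi_lt]
      rfl
    · rcases Nat.lt_or_ge j.val (m+1) with h2 | h2
      · have hj : j = ⟨m, by omega⟩ := by ext; simp; omega
        rw [hj, psi_m]
        have : ∀ a b : ZMod 2, (if lbl a b = 0 ∨ lbl a b = 1 then (0:ZMod 2) else 1) = a := by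
          decide
        exact this _ _
      · have hj : j = ⟨m + 1, by omega⟩ := by ext; simp; have := j.isLt; omega
        rw [hj, psi_m1]
        have : ∀ a b : ZMod 2, (if lbl a b = 0 ∨ lbl a b = 3 then (0:ZMod 2) else 1) = b := by
          decide
        exact this _ _
  right_inv := by
    intro p
    have h1 : (phi m (psi m p)).1 = p.1 := by
      funext k
      show psi m p (Fin.castLE (by omega) k) = p.1 k
      rw [psi_lt]
    have h2 : (phi m (psi m p)).2 = p.2 := by
      show lbl (psi m p ⟨m, by omega⟩) (psi m p ⟨m+1, by omega⟩) = p.2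
      rw [psi_m, psi_m1]
      exact (by decide : ∀ c : Fin 4,
        lbl (if c = 0 ∨ c = 1 then (0:ZMod 2) else 1) (if c = 0 ∨ c = 3 then (0:ZMod 2) else 1) = c) p.2
    exact Prod.ext h1 h2

end SCI

namespace SCI

lemma sqDelta_lo (m : ℕ) (x : Fin (m+2) → ZMod 2) (i : Fin (m+2)) (hi : i.val + 3 ≤ m) :
    sqDelta (m+2) x i = fun j =>
      (if j.val = i.val then 1 else 0) +
      (if j.val = i.val + 1 then x ⟨m, by omega⟩ else 0) +
      (if j.val = i.val + 2 then x ⟨m+1, by omega⟩ else 0) := by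
  funext j
  simp only [sqDelta, if_pos (show i.val + 5 ≤ m + 2 by omega), Fin.ext_iff]
  rw [add_assoc]
  rfl

lemma sqDelta_mid (m : ℕ) (hm : 4 ≤ m) (x : Fin (m+2) → ZMod 2) (i : Fin (m+2))
    (hi1 : m ≤ i.val + 2) (hi2 : i.val < m) :
    sqDelta (m+2) x i = fun j =>
      (if j.val = i.val then 1 else 0) +
      (if j.val = i.val + 1 then x ⟨m+1, by omega⟩ else 0) := by
  funext j
  simp only [sqDelta, if_neg (show ¬ i.val + 5 ≤ m + 2 by omega),
    if_neg (show ¬ m + 2 ≤ i.val + 2 by omega), Fin.ext_iff]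
  rfl

lemma sqDelta_hi (m : ℕ) (x : Fin (m+2) → ZMod 2) (i : Fin (m+2)) (hi : m ≤ i.val) :
    sqDelta (m+2) x i = fun j => (if j.val = i.val then 1 else 0) := by
  funext j
  simp only [sqDelta, if_neg (show ¬ i.val + 5 ≤ m + 2 by omega),
    if_pos (show m + 2 ≤ i.val + 2 by omega), Fin.ext_iff]
  ring

end SCI

namespace SCI

def gRel (m : ℕ) (hm : 4 ≤ m) (p q : (Fin m → ZMod 2) × Fin 4) : Prop :=
    (p.2 = 0 ∧ q.2 = 0 ∧ ∃ i : Fin m, q.1 - p.1 = Pi.single i 1) ∨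
    (p.2 = 1 ∧ q.2 = 1 ∧
      ((∃ i : Fin m, ∃ h : i.val + 3 ≤ m,
          q.1 - p.1 = Pi.single i 1 + Pi.single (⟨i.val + 2, by omega⟩ : Fin m) 1) ∨
        q.1 - p.1 = Pi.single (⟨m - 2, by omega⟩ : Fin m) 1 +
          Pi.single (⟨m - 1, by omega⟩ : Fin m) 1)) ∨
    (p.2 = 2 ∧ q.2 = 2 ∧
      ((∃ i : Fin m, ∃ h : i.val + 3 ≤ m,
          q.1 - p.1 = Pi.single i 1 + Pi.single (⟨i.val + 1, by omega⟩ : Fin m) 1 +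
            Pi.single (⟨i.val + 2, by omega⟩ : Fin m) 1) ∨
        q.1 - p.1 = Pi.single (⟨m - 2, by omega⟩ : Fin m) 1 +
          Pi.single (⟨m - 1, by omega⟩ : Fin m) 1)) ∨
    (p.2 = 3 ∧ q.2 = 3 ∧
      ((∃ i : Fin m, ∃ h : i.val + 3 ≤ m,
          q.1 - p.1 = Pi.single i 1 + Pi.single (⟨i.val + 1, by omega⟩ : Fin m) 1) ∨
        q.1 - p.1 = Pi.single (⟨m - 2, by omega⟩ : Fin m) 1 ∨
        q.1 - p.1 = Pi.single (⟨m - 1, by omega⟩ : Fin m) 1)) ∨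
    (p.2 = 0 ∧ q.2 = 1 ∧ q.1 = p.1) ∨
    (p.2 = 0 ∧ q.2 = 3 ∧ q.1 = p.1) ∨
    (p.2 = 2 ∧ q.2 = 3 ∧ q.1 = p.1) ∨
    (p.2 = 1 ∧ q.2 = 2 ∧
      (q.1 = p.1 ∨ q.1 - p.1 = Pi.single (⟨m - 1, by omega⟩ : Fin m) 1))

-- pointwise sqDelta lemmas with the last two coordinates abstracted
lemma sqDelta_lo_apply (m : ℕ) (x : Fin (m+2) → ZMod 2) (i : Fin (m+2)) (hi : i.val + 3 ≤ m)
    (a b : ZMod 2) (ha : x ⟨m, by omega⟩ = a) (hb : x ⟨m+1, by omega⟩ = b) (j : Fin (m+2)) :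
    sqDelta (m+2) x i j =
      (if j.val = i.val then 1 else 0) +
      (if j.val = i.val + 1 then a else 0) +
      (if j.val = i.val + 2 then b else 0) := by
  subst ha hb
  rw [sqDelta_lo m x i hi]

lemma sqDelta_mid_apply (m : ℕ) (hm : 4 ≤ m) (x : Fin (m+2) → ZMod 2) (i : Fin (m+2))
    (hi1 : m ≤ i.val + 2) (hi2 : i.val < m)
    (b : ZMod 2) (hb : x ⟨m+1, by omega⟩ = b) (j : Fin (m+2)) :
    sqDelta (m+2) x i j =
      (if j.val = i.val then 1 else 0) +
      (if j.val = i.val + 1 then b else 0) := by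
  subst hb
  rw [sqDelta_mid m hm x i hi1 hi2]

lemma sqDelta_hi_apply (m : ℕ) (x : Fin (m+2) → ZMod 2) (i : Fin (m+2)) (hi : m ≤ i.val)
    (j : Fin (m+2)) :
    sqDelta (m+2) x i j = (if j.val = i.val then 1 else 0) := by
  rw [sqDelta_hi m x i hi]

lemma phi_snd_eq (m : ℕ) (x : Fin (m+2) → ZMod 2) (a b : ZMod 2)
    (ha : x ⟨m, by omega⟩ = a) (hb : x ⟨m+1, by omega⟩ = b) :
    (phi m x).2 = lbl a b := by
  subst ha hb; rfl

lemma fst_diff_add (m : ℕ) (x d : Fin (m+2) → ZMod 2) (w : Fin m → ZMod 2)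
    (h : ∀ k : Fin m, d (Fin.castLE (by omega) k) = w k) :
    (phi m (x + d)).1 - (phi m x).1 = w := by
  funext k
  simp [phi, h k]

lemma fst_eq_add (m : ℕ) (x d : Fin (m+2) → ZMod 2)
    (h : ∀ k : Fin m, d (Fin.castLE (by omega) k) = 0) :
    (phi m (x + d)).1 = (phi m x).1 := by
  funext k
  simp [phi, h k]

lemma add_apply' (m : ℕ) (x d : Fin (m+2) → ZMod 2) (j : Fin (m+2)) :
    (x + d) j = x j + d j := rfl

end SCI

namespace SCI

lemma forwardA (m : ℕ) (hm : 4 ≤ m) (x : Fin (m+2) → ZMod 2) (i : Fin (m+2))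
    (hA : i.val + 3 ≤ m) :
    gRel m hm (phi m x) (phi m (x + sqDelta (m+2) x i)) ∨
    gRel m hm (phi m (x + sqDelta (m+2) x i)) (phi m x) := by
  obtain ⟨a, ha⟩ : ∃ a, x ⟨m, by omega⟩ = a := ⟨_, rfl⟩
  obtain ⟨b, hb⟩ : ∃ b, x ⟨m+1, by omega⟩ = b := ⟨_, rfl⟩
  have hp2 : (phi m x).2 = lbl a b := phi_snd_eq m x a b ha hb
  have hδ := sqDelta_lo_apply m x i hA a b ha hb
  have hym : (x + sqDelta (m+2) x i) ⟨m, by omega⟩ = a := by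
    rw [add_apply', ha, hδ, if_neg (by simp only [Fin.val_mk]; omega), if_neg (by simp only [Fin.val_mk]; omega), if_neg (by simp only [Fin.val_mk]; omega)]
    ring
  have hym1 : (x + sqDelta (m+2) x i) ⟨m+1, by omega⟩ = b := by
    rw [add_apply', hb, hδ, if_neg (by simp only [Fin.val_mk]; omega), if_neg (by simp only [Fin.val_mk]; omega), if_neg (by simp only [Fin.val_mk]; omega)]
    ring
  have hq2 : (phi m (x + sqDelta (m+2) x i)).2 = lbl a b := phi_snd_eq m _ a b hym hym1
  rcases z2 a with rfl | rfl <;> rcases z2 b with rfl | rfl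
  · -- (0,0), label 0
    refine Or.inl (Or.inl ⟨by rw [hp2]; decide, by rw [hq2]; decide, ⟨i.val, by omega⟩, ?_⟩)
    refine fst_diff_add m x _ _ fun k => ?_
    rw [hδ]
    simp only [Fin.coe_castLE, Fin.val_mk, Pi.single_apply, Fin.ext_iff]
    all_goals split_ifs <;> first | omega | decide
  · -- (0,1), label 1
    refine Or.inl (Or.inr (Or.inl ⟨by rw [hp2]; decide, by rw [hq2]; decide,
      Or.inl ⟨⟨i.val, by omega⟩, by simp only [Fin.val_mk]; omega, ?_⟩⟩))
    refine fst_diff_add m x _ _ fun k => ?_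
    rw [hδ]
    simp only [Fin.coe_castLE, Fin.val_mk, Pi.single_apply, Fin.ext_iff, Pi.add_apply]
    all_goals split_ifs <;> first | omega | decide
  · -- (1,0), label 3
    refine Or.inl (Or.inr (Or.inr (Or.inr (Or.inl ⟨by rw [hp2]; decide, by rw [hq2]; decide,
      Or.inl ⟨⟨i.val, by omega⟩, by simp only [Fin.val_mk]; omega, ?_⟩⟩))))
    refine fst_diff_add m x _ _ fun k => ?_
    rw [hδ]
    simp only [Fin.coe_castLE, Fin.val_mk, Pi.single_apply, Fin.ext_iff, Pi.add_apply]
    all_goals split_ifs <;> first | omega | decide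
  · -- (1,1), label 2
    refine Or.inl (Or.inr (Or.inr (Or.inl ⟨by rw [hp2]; decide, by rw [hq2]; decide,
      Or.inl ⟨⟨i.val, by omega⟩, by simp only [Fin.val_mk]; omega, ?_⟩⟩)))
    refine fst_diff_add m x _ _ fun k => ?_
    rw [hδ]
    simp only [Fin.coe_castLE, Fin.val_mk, Pi.single_apply, Fin.ext_iff, Pi.add_apply]
    all_goals split_ifs <;> first | omega | decide

end SCI

namespace SCI

lemma fst_diff_add' (m : ℕ) (x d : Fin (m+2) → ZMod 2) (w : Fin m → ZMod 2)
    (h : ∀ k : Fin m, d (Fin.castLE (by omega) k) = w k) :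
    (phi m x).1 - (phi m (x + d)).1 = w := by
  funext k
  have h2 : ∀ u v w : ZMod 2, v = w → u - (u + v) = w := by decide
  exact h2 _ _ _ (h k)

lemma forwardB1 (m : ℕ) (hm : 4 ≤ m) (x : Fin (m+2) → ZMod 2) (i : Fin (m+2))
    (hB : i.val + 2 = m) :
    gRel m hm (phi m x) (phi m (x + sqDelta (m+2) x i)) ∨
    gRel m hm (phi m (x + sqDelta (m+2) x i)) (phi m x) := by
  obtain ⟨a, ha⟩ : ∃ a, x ⟨m, by omega⟩ = a := ⟨_, rfl⟩
  obtain ⟨b, hb⟩ : ∃ b, x ⟨m+1, by omega⟩ = b := ⟨_, rfl⟩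
  have hp2 : (phi m x).2 = lbl a b := phi_snd_eq m x a b ha hb
  have hδ := sqDelta_mid_apply m hm x i (by omega) (by omega) b hb
  have hym : (x + sqDelta (m+2) x i) ⟨m, by omega⟩ = a := by
    rw [add_apply', ha, hδ, if_neg (by simp only [Fin.val_mk]; omega),
      if_neg (by simp only [Fin.val_mk]; omega)]
    ring
  have hym1 : (x + sqDelta (m+2) x i) ⟨m+1, by omega⟩ = b := by
    rw [add_apply', hb, hδ, if_neg (by simp only [Fin.val_mk]; omega),
      if_neg (by simp only [Fin.val_mk]; omega)]
    ring
  have hq2 : (phi m (x + sqDelta (m+2) x i)).2 = lbl a b := phi_snd_eq m _ a b hym hym1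
  rcases z2 a with rfl | rfl <;> rcases z2 b with rfl | rfl
  · -- (0,0), label 0
    refine Or.inl (Or.inl ⟨by rw [hp2]; decide, by rw [hq2]; decide, ⟨i.val, by omega⟩, ?_⟩)
    refine fst_diff_add m x _ _ fun k => ?_
    rw [hδ]
    simp only [Fin.coe_castLE, Fin.val_mk, Pi.single_apply, Fin.ext_iff]
    all_goals split_ifs <;> first | omega | decide
  · -- (0,1), label 1
    refine Or.inl (Or.inr (Or.inl ⟨by rw [hp2]; decide, by rw [hq2]; decide, Or.inr ?_⟩))
    refine fst_diff_add m x _ _ fun k => ?_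
    rw [hδ]
    simp only [Fin.coe_castLE, Fin.val_mk, Pi.single_apply, Fin.ext_iff, Pi.add_apply]
    all_goals split_ifs <;> first | omega | decide
  · -- (1,0), label 3
    refine Or.inl (Or.inr (Or.inr (Or.inr (Or.inl ⟨by rw [hp2]; decide, by rw [hq2]; decide,
      Or.inr (Or.inl ?_)⟩))))
    refine fst_diff_add m x _ _ fun k => ?_
    rw [hδ]
    simp only [Fin.coe_castLE, Fin.val_mk, Pi.single_apply, Fin.ext_iff]
    all_goals split_ifs <;> first | omega | decide
  · -- (1,1), label 2
    refine Or.inl (Or.inr (Or.inr (Or.inl ⟨by rw [hp2]; decide, by rw [hq2]; decide,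
      Or.inr ?_⟩)))
    refine fst_diff_add m x _ _ fun k => ?_
    rw [hδ]
    simp only [Fin.coe_castLE, Fin.val_mk, Pi.single_apply, Fin.ext_iff, Pi.add_apply]
    all_goals split_ifs <;> first | omega | decide

lemma forwardB2 (m : ℕ) (hm : 4 ≤ m) (x : Fin (m+2) → ZMod 2) (i : Fin (m+2))
    (hB : i.val + 1 = m) :
    gRel m hm (phi m x) (phi m (x + sqDelta (m+2) x i)) ∨
    gRel m hm (phi m (x + sqDelta (m+2) x i)) (phi m x) := by
  obtain ⟨a, ha⟩ : ∃ a, x ⟨m, by omega⟩ = a := ⟨_, rfl⟩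
  obtain ⟨b, hb⟩ : ∃ b, x ⟨m+1, by omega⟩ = b := ⟨_, rfl⟩
  have hp2 : (phi m x).2 = lbl a b := phi_snd_eq m x a b ha hb
  have hδ := sqDelta_mid_apply m hm x i (by omega) (by omega) b hb
  have hym : (x + sqDelta (m+2) x i) ⟨m, by omega⟩ = a + b := by
    rw [add_apply', ha, hδ, if_neg (by simp only [Fin.val_mk]; omega),
      if_pos (by simp only [Fin.val_mk]; omega)]
    ring
  have hym1 : (x + sqDelta (m+2) x i) ⟨m+1, by omega⟩ = b := by
    rw [add_apply', hb, hδ, if_neg (by simp only [Fin.val_mk]; omega),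
      if_neg (by simp only [Fin.val_mk]; omega)]
    ring
  have hq2 : (phi m (x + sqDelta (m+2) x i)).2 = lbl (a + b) b := phi_snd_eq m _ _ _ hym hym1
  rcases z2 a with rfl | rfl <;> rcases z2 b with rfl | rfl
  · -- (0,0): label 0 → 0, diff e_{m-1}
    refine Or.inl (Or.inl ⟨by rw [hp2]; decide, by rw [hq2]; decide, ⟨i.val, by omega⟩, ?_⟩)
    refine fst_diff_add m x _ _ fun k => ?_
    rw [hδ]
    simp only [Fin.coe_castLE, Fin.val_mk, Pi.single_apply, Fin.ext_iff]
    all_goals split_ifs <;> first | omega | decide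
  · -- (0,1): label 1 → 2, diff e_{m-1}; clause 8 second option
    refine Or.inl (Or.inr (Or.inr (Or.inr (Or.inr (Or.inr (Or.inr (Or.inr
      ⟨by rw [hp2]; decide, by rw [hq2]; decide, Or.inr ?_⟩)))))))
    refine fst_diff_add m x _ _ fun k => ?_
    rw [hδ]
    simp only [Fin.coe_castLE, Fin.val_mk, Pi.single_apply, Fin.ext_iff]
    all_goals split_ifs <;> first | omega | decide
  · -- (1,0): label 3 → 3, diff e_{m-1}; clause 4 third option
    refine Or.inl (Or.inr (Or.inr (Or.inr (Or.inl ⟨by rw [hp2]; decide, by rw [hq2]; decide,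
      Or.inr (Or.inr ?_)⟩))))
    refine fst_diff_add m x _ _ fun k => ?_
    rw [hδ]
    simp only [Fin.coe_castLE, Fin.val_mk, Pi.single_apply, Fin.ext_iff]
    all_goals split_ifs <;> first | omega | decide
  · -- (1,1): label 2 → 1; reversed clause 8 second option
    refine Or.inr (Or.inr (Or.inr (Or.inr (Or.inr (Or.inr (Or.inr (Or.inr
      ⟨by rw [hq2]; decide, by rw [hp2]; decide, Or.inr ?_⟩)))))))
    refine fst_diff_add' m x _ _ fun k => ?_
    rw [hδ]
    simp only [Fin.coe_castLE, Fin.val_mk, Pi.single_apply, Fin.ext_iff]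
    all_goals split_ifs <;> first | omega | decide

lemma forwardD (m : ℕ) (hm : 4 ≤ m) (x : Fin (m+2) → ZMod 2) (i : Fin (m+2))
    (hB : i.val = m) :
    gRel m hm (phi m x) (phi m (x + sqDelta (m+2) x i)) ∨
    gRel m hm (phi m (x + sqDelta (m+2) x i)) (phi m x) := by
  obtain ⟨a, ha⟩ : ∃ a, x ⟨m, by omega⟩ = a := ⟨_, rfl⟩
  obtain ⟨b, hb⟩ : ∃ b, x ⟨m+1, by omega⟩ = b := ⟨_, rfl⟩
  have hp2 : (phi m x).2 = lbl a b := phi_snd_eq m x a b ha hb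
  have hδ := sqDelta_hi_apply m x i (by omega)
  have hym : (x + sqDelta (m+2) x i) ⟨m, by omega⟩ = a + 1 := by
    rw [add_apply', ha, hδ, if_pos (by simp only [Fin.val_mk]; omega)]
  have hym1 : (x + sqDelta (m+2) x i) ⟨m+1, by omega⟩ = b := by
    rw [add_apply', hb, hδ, if_neg (by simp only [Fin.val_mk]; omega)]
    ring
  have hq2 : (phi m (x + sqDelta (m+2) x i)).2 = lbl (a + 1) b := phi_snd_eq m _ _ _ hym hym1
  have heq : (phi m (x + sqDelta (m+2) x i)).1 = (phi m x).1 := by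
    refine fst_eq_add m x _ fun k => ?_
    rw [hδ]
    simp only [Fin.coe_castLE]
    rw [if_neg (by omega)]
  rcases z2 a with rfl | rfl <;> rcases z2 b with rfl | rfl
  · -- 0 → 3 : clause 6
    exact Or.inl (Or.inr (Or.inr (Or.inr (Or.inr (Or.inr (Or.inl
      ⟨by rw [hp2]; decide, by rw [hq2]; decide, heq⟩))))))
  · -- 1 → 2 : clause 8
    exact Or.inl (Or.inr (Or.inr (Or.inr (Or.inr (Or.inr (Or.inr (Or.inr
      ⟨by rw [hp2]; decide, by rw [hq2]; decide, Or.inl heq⟩)))))))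
  · -- 3 → 0 : reversed clause 6
    exact Or.inr (Or.inr (Or.inr (Or.inr (Or.inr (Or.inr (Or.inl
      ⟨by rw [hq2]; decide, by rw [hp2]; decide, heq.symm⟩))))))
  · -- 2 → 1 : reversed clause 8
    exact Or.inr (Or.inr (Or.inr (Or.inr (Or.inr (Or.inr (Or.inr (Or.inr
      ⟨by rw [hq2]; decide, by rw [hp2]; decide, Or.inl heq.symm⟩)))))))

lemma forwardE (m : ℕ) (hm : 4 ≤ m) (x : Fin (m+2) → ZMod 2) (i : Fin (m+2))
    (hB : i.val = m + 1) :
    gRel m hm (phi m x) (phi m (x + sqDelta (m+2) x i)) ∨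
    gRel m hm (phi m (x + sqDelta (m+2) x i)) (phi m x) := by
  obtain ⟨a, ha⟩ : ∃ a, x ⟨m, by omega⟩ = a := ⟨_, rfl⟩
  obtain ⟨b, hb⟩ : ∃ b, x ⟨m+1, by omega⟩ = b := ⟨_, rfl⟩
  have hp2 : (phi m x).2 = lbl a b := phi_snd_eq m x a b ha hb
  have hδ := sqDelta_hi_apply m x i (by omega)
  have hym : (x + sqDelta (m+2) x i) ⟨m, by omega⟩ = a := by
    rw [add_apply', ha, hδ, if_neg (by simp only [Fin.val_mk]; omega)]
    ring
  have hym1 : (x + sqDelta (m+2) x i) ⟨m+1, by omega⟩ = b + 1 := by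
    rw [add_apply', hb, hδ, if_pos (by simp only [Fin.val_mk]; omega)]
  have hq2 : (phi m (x + sqDelta (m+2) x i)).2 = lbl a (b + 1) := phi_snd_eq m _ _ _ hym hym1
  have heq : (phi m (x + sqDelta (m+2) x i)).1 = (phi m x).1 := by
    refine fst_eq_add m x _ fun k => ?_
    rw [hδ]
    simp only [Fin.coe_castLE]
    rw [if_neg (by omega)]
  rcases z2 a with rfl | rfl <;> rcases z2 b with rfl | rfl
  · -- 0 → 1 : clause 5
    exact Or.inl (Or.inr (Or.inr (Or.inr (Or.inr (Or.inl
      ⟨by rw [hp2]; decide, by rw [hq2]; decide, heq⟩)))))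
  · -- 1 → 0 : reversed clause 5
    exact Or.inr (Or.inr (Or.inr (Or.inr (Or.inr (Or.inl
      ⟨by rw [hq2]; decide, by rw [hp2]; decide, heq.symm⟩)))))
  · -- 3 → 2 : reversed clause 7
    exact Or.inr (Or.inr (Or.inr (Or.inr (Or.inr (Or.inr (Or.inr (Or.inl
      ⟨by rw [hq2]; decide, by rw [hp2]; decide, heq.symm⟩)))))))
  · -- 2 → 3 : clause 7
    exact Or.inl (Or.inr (Or.inr (Or.inr (Or.inr (Or.inr (Or.inr (Or.inl
      ⟨by rw [hp2]; decide, by rw [hq2]; decide, heq⟩)))))))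

lemma forward (m : ℕ) (hm : 4 ≤ m) (x : Fin (m+2) → ZMod 2) (i : Fin (m+2)) :
    gRel m hm (phi m x) (phi m (x + sqDelta (m+2) x i)) ∨
    gRel m hm (phi m (x + sqDelta (m+2) x i)) (phi m x) := by
  have hi := i.isLt
  by_cases hA : i.val + 3 ≤ m
  · exact forwardA m hm x i hA
  · rcases (by omega : i.val + 2 = m ∨ i.val + 1 = m ∨ i.val = m ∨ i.val = m + 1) with
      h | h | h | h
    · exact forwardB1 m hm x i h
    · exact forwardB2 m hm x i h
    · exact forwardD m hm x i h
    · exact forwardE m hm x i h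

end SCI

namespace SCI

theorem lbl_inv0 : ∀ a b : ZMod 2, lbl a b = 0 → a = 0 ∧ b = 0 := by decide
theorem lbl_inv1 : ∀ a b : ZMod 2, lbl a b = 1 → a = 0 ∧ b = 1 := by decide
theorem lbl_inv2 : ∀ a b : ZMod 2, lbl a b = 2 → a = 1 ∧ b = 1 := by decide
theorem lbl_inv3 : ∀ a b : ZMod 2, lbl a b = 3 → a = 1 ∧ b = 0 := by decide

lemma diff_pw (m : ℕ) (x y : Fin (m+2) → ZMod 2) (w : Fin m → ZMod 2)
    (h : (phi m y).1 - (phi m x).1 = w) (k : Fin m) :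
    y (Fin.castLE (by omega) k) = x (Fin.castLE (by omega) k) + w k := by
  have h2 := congrFun h k
  have h3 : ∀ u v t : ZMod 2, u - v = t → u = v + t := by decide
  exact h3 _ _ _ h2

lemma eq_pw (m : ℕ) (x y : Fin (m+2) → ZMod 2)
    (h : (phi m y).1 = (phi m x).1) (k : Fin m) :
    y (Fin.castLE (by omega) k) = x (Fin.castLE (by omega) k) := congrFun h k

lemma sqDelta_zero_apply (m : ℕ) (hm : 4 ≤ m) (x : Fin (m+2) → ZMod 2) (i : Fin (m+2))
    (ha : x ⟨m, by omega⟩ = 0) (hb : x ⟨m+1, by omega⟩ = 0) (j : Fin (m+2)) :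
    sqDelta (m+2) x i j = if j.val = i.val then 1 else 0 := by
  have hi := i.isLt
  by_cases h1 : i.val + 3 ≤ m
  · rw [sqDelta_lo_apply m x i h1 0 0 ha hb]
    split_ifs <;> simp
  · by_cases h2 : i.val < m
    · rw [sqDelta_mid_apply m hm x i (by omega) h2 0 hb]
      split_ifs <;> simp
    · rw [sqDelta_hi_apply m x i (by omega)]

lemma build (m : ℕ) (x y : Fin (m+2) → ZMod 2) (i : Fin (m+2))
    (h1 : ∀ k : Fin m, y (Fin.castLE (by omega) k) =
      x (Fin.castLE (by omega) k) + sqDelta (m+2) x i (Fin.castLE (by omega) k))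
    (h2 : y ⟨m, by omega⟩ = x ⟨m, by omega⟩ + sqDelta (m+2) x i ⟨m, by omega⟩)
    (h3 : y ⟨m+1, by omega⟩ = x ⟨m+1, by omega⟩ + sqDelta (m+2) x i ⟨m+1, by omega⟩) :
    y = x + sqDelta (m+2) x i := by
  funext j
  by_cases hj : j.val < m
  · have e : j = Fin.castLE (by omega) (⟨j.val, hj⟩ : Fin m) := by ext; rfl
    rw [e]
    exact h1 _
  · rcases (by have := j.isLt; omega : j.val = m ∨ j.val = m + 1) with e | e
    · have e2 : j = ⟨m, by omega⟩ := by ext; simp [e]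
      rw [e2]; exact h2
    · have e2 : j = ⟨m+1, by omega⟩ := by ext; simp [e]
      rw [e2]; exact h3

end SCI

namespace SCI

lemma backward (m : ℕ) (hm : 4 ≤ m) (x y : Fin (m+2) → ZMod 2)
    (h : gRel m hm (phi m x) (phi m y)) :
    ∃ i : Fin (m+2), y = x + sqDelta (m+2) x i := by
  obtain ⟨a, ha⟩ : ∃ a, x ⟨m, by omega⟩ = a := ⟨_, rfl⟩
  obtain ⟨b, hb⟩ : ∃ b, x ⟨m+1, by omega⟩ = b := ⟨_, rfl⟩
  obtain ⟨a', ha'⟩ : ∃ a, y ⟨m, by omega⟩ = a := ⟨_, rfl⟩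
  obtain ⟨b', hb'⟩ : ∃ b, y ⟨m+1, by omega⟩ = b := ⟨_, rfl⟩
  have hp2 : (phi m x).2 = lbl a b := phi_snd_eq m x a b ha hb
  have hq2 : (phi m y).2 = lbl a' b' := phi_snd_eq m y a' b' ha' hb'
  rcases h with ⟨h1, h2, i0, hd⟩ | ⟨h1, h2, hd⟩ | ⟨h1, h2, hd⟩ | ⟨h1, h2, hd⟩ |
    ⟨h1, h2, hd⟩ | ⟨h1, h2, hd⟩ | ⟨h1, h2, hd⟩ | ⟨h1, h2, hd⟩
  · -- clause 1 : labels 0,0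
    obtain ⟨rfl, rfl⟩ := lbl_inv0 a b (hp2.symm.trans h1)
    obtain ⟨rfl, rfl⟩ := lbl_inv0 a' b' (hq2.symm.trans h2)
    refine ⟨⟨i0.val, by omega⟩, build m x y _ (fun k => ?_) ?_ ?_⟩
    · rw [diff_pw m x y _ hd k, sqDelta_zero_apply m hm x _ ha hb]
      congr 1
      simp only [Fin.coe_castLE, Fin.val_mk, Pi.single_apply, Fin.ext_iff]
      all_goals split_ifs <;> first | omega | decide
    · rw [ha', ha, sqDelta_zero_apply m hm x _ ha hb,
        if_neg (by simp only [Fin.val_mk]; have := i0.isLt; omega)]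
      decide
    · rw [hb', hb, sqDelta_zero_apply m hm x _ ha hb,
        if_neg (by simp only [Fin.val_mk]; have := i0.isLt; omega)]
      decide
  · -- clause 2 : labels 1,1
    obtain ⟨rfl, rfl⟩ := lbl_inv1 a b (hp2.symm.trans h1)
    obtain ⟨rfl, rfl⟩ := lbl_inv1 a' b' (hq2.symm.trans h2)
    rcases hd with ⟨i0, hi0, hd⟩ | hd
    · refine ⟨⟨i0.val, by omega⟩, build m x y _ (fun k => ?_) ?_ ?_⟩
      · rw [diff_pw m x y _ hd k,
          sqDelta_lo_apply m x _ (by simp only [Fin.val_mk]; omega) 0 1 ha hb]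
        congr 1
        simp only [Fin.coe_castLE, Fin.val_mk, Pi.single_apply, Fin.ext_iff, Pi.add_apply]
        all_goals split_ifs <;> first | omega | decide
      · rw [ha', ha, sqDelta_lo_apply m x _ (by simp only [Fin.val_mk]; omega) 0 1 ha hb,
          if_neg (by simp only [Fin.val_mk]; omega), if_neg (by simp only [Fin.val_mk]; omega),
          if_neg (by simp only [Fin.val_mk]; omega)]
        decide
      · rw [hb', hb, sqDelta_lo_apply m x _ (by simp only [Fin.val_mk]; omega) 0 1 ha hb,
          if_neg (by simp only [Fin.val_mk]; omega), if_neg (by simp only [Fin.val_mk]; omega),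
          if_neg (by simp only [Fin.val_mk]; omega)]
        decide
    · refine ⟨⟨m - 2, by omega⟩, build m x y _ (fun k => ?_) ?_ ?_⟩
      · rw [diff_pw m x y _ hd k,
          sqDelta_mid_apply m hm x _ (by simp only [Fin.val_mk]; omega)
            (by simp only [Fin.val_mk]; omega) 1 hb]
        congr 1
        simp only [Fin.coe_castLE, Fin.val_mk, Pi.single_apply, Fin.ext_iff, Pi.add_apply]
        all_goals split_ifs <;> first | omega | decide
      · rw [ha', ha, sqDelta_mid_apply m hm x _ (by simp only [Fin.val_mk]; omega)
            (by simp only [Fin.val_mk]; omega) 1 hb,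
          if_neg (by simp only [Fin.val_mk]; omega), if_neg (by simp only [Fin.val_mk]; omega)]
        decide
      · rw [hb', hb, sqDelta_mid_apply m hm x _ (by simp only [Fin.val_mk]; omega)
            (by simp only [Fin.val_mk]; omega) 1 hb,
          if_neg (by simp only [Fin.val_mk]; omega), if_neg (by simp only [Fin.val_mk]; omega)]
        decide
  · -- clause 3 : labels 2,2
    obtain ⟨rfl, rfl⟩ := lbl_inv2 a b (hp2.symm.trans h1)
    obtain ⟨rfl, rfl⟩ := lbl_inv2 a' b' (hq2.symm.trans h2)
    rcases hd with ⟨i0, hi0, hd⟩ | hd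
    · refine ⟨⟨i0.val, by omega⟩, build m x y _ (fun k => ?_) ?_ ?_⟩
      · rw [diff_pw m x y _ hd k,
          sqDelta_lo_apply m x _ (by simp only [Fin.val_mk]; omega) 1 1 ha hb]
        congr 1
        simp only [Fin.coe_castLE, Fin.val_mk, Pi.single_apply, Fin.ext_iff, Pi.add_apply]
        all_goals split_ifs <;> first | omega | decide
      · rw [ha', ha, sqDelta_lo_apply m x _ (by simp only [Fin.val_mk]; omega) 1 1 ha hb,
          if_neg (by simp only [Fin.val_mk]; omega), if_neg (by simp only [Fin.val_mk]; omega),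
          if_neg (by simp only [Fin.val_mk]; omega)]
        decide
      · rw [hb', hb, sqDelta_lo_apply m x _ (by simp only [Fin.val_mk]; omega) 1 1 ha hb,
          if_neg (by simp only [Fin.val_mk]; omega), if_neg (by simp only [Fin.val_mk]; omega),
          if_neg (by simp only [Fin.val_mk]; omega)]
        decide
    · refine ⟨⟨m - 2, by omega⟩, build m x y _ (fun k => ?_) ?_ ?_⟩
      · rw [diff_pw m x y _ hd k,
          sqDelta_mid_apply m hm x _ (by simp only [Fin.val_mk]; omega)
            (by simp only [Fin.val_mk]; omega) 1 hb]
        congr 1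
        simp only [Fin.coe_castLE, Fin.val_mk, Pi.single_apply, Fin.ext_iff, Pi.add_apply]
        all_goals split_ifs <;> first | omega | decide
      · rw [ha', ha, sqDelta_mid_apply m hm x _ (by simp only [Fin.val_mk]; omega)
            (by simp only [Fin.val_mk]; omega) 1 hb,
          if_neg (by simp only [Fin.val_mk]; omega), if_neg (by simp only [Fin.val_mk]; omega)]
        decide
      · rw [hb', hb, sqDelta_mid_apply m hm x _ (by simp only [Fin.val_mk]; omega)
            (by simp only [Fin.val_mk]; omega) 1 hb,
          if_neg (by simp only [Fin.val_mk]; omega), if_neg (by simp only [Fin.val_mk]; omega)]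
        decide
  · -- clause 4 : labels 3,3
    obtain ⟨rfl, rfl⟩ := lbl_inv3 a b (hp2.symm.trans h1)
    obtain ⟨rfl, rfl⟩ := lbl_inv3 a' b' (hq2.symm.trans h2)
    rcases hd with ⟨i0, hi0, hd⟩ | hd | hd
    · refine ⟨⟨i0.val, by omega⟩, build m x y _ (fun k => ?_) ?_ ?_⟩
      · rw [diff_pw m x y _ hd k,
          sqDelta_lo_apply m x _ (by simp only [Fin.val_mk]; omega) 1 0 ha hb]
        congr 1
        simp only [Fin.coe_castLE, Fin.val_mk, Pi.single_apply, Fin.ext_iff, Pi.add_apply]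
        all_goals split_ifs <;> first | omega | decide
      · rw [ha', ha, sqDelta_lo_apply m x _ (by simp only [Fin.val_mk]; omega) 1 0 ha hb,
          if_neg (by simp only [Fin.val_mk]; omega), if_neg (by simp only [Fin.val_mk]; omega),
          if_neg (by simp only [Fin.val_mk]; omega)]
        decide
      · rw [hb', hb, sqDelta_lo_apply m x _ (by simp only [Fin.val_mk]; omega) 1 0 ha hb,
          if_neg (by simp only [Fin.val_mk]; omega), if_neg (by simp only [Fin.val_mk]; omega),
          if_neg (by simp only [Fin.val_mk]; omega)]
        decide
    · refine ⟨⟨m - 2, by omega⟩, build m x y _ (fun k => ?_) ?_ ?_⟩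
      · rw [diff_pw m x y _ hd k,
          sqDelta_mid_apply m hm x _ (by simp only [Fin.val_mk]; omega)
            (by simp only [Fin.val_mk]; omega) 0 hb]
        congr 1
        simp only [Fin.coe_castLE, Fin.val_mk, Pi.single_apply, Fin.ext_iff]
        all_goals split_ifs <;> first | omega | decide
      · rw [ha', ha, sqDelta_mid_apply m hm x _ (by simp only [Fin.val_mk]; omega)
            (by simp only [Fin.val_mk]; omega) 0 hb,
          if_neg (by simp only [Fin.val_mk]; omega), if_neg (by simp only [Fin.val_mk]; omega)]
        decide
      · rw [hb', hb, sqDelta_mid_apply m hm x _ (by simp only [Fin.val_mk]; omega)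
            (by simp only [Fin.val_mk]; omega) 0 hb,
          if_neg (by simp only [Fin.val_mk]; omega), if_neg (by simp only [Fin.val_mk]; omega)]
        decide
    · refine ⟨⟨m - 1, by omega⟩, build m x y _ (fun k => ?_) ?_ ?_⟩
      · rw [diff_pw m x y _ hd k,
          sqDelta_mid_apply m hm x _ (by simp only [Fin.val_mk]; omega)
            (by simp only [Fin.val_mk]; omega) 0 hb]
        congr 1
        simp only [Fin.coe_castLE, Fin.val_mk, Pi.single_apply, Fin.ext_iff]
        all_goals split_ifs <;> first | omega | decide
      · rw [ha', ha, sqDelta_mid_apply m hm x _ (by simp only [Fin.val_mk]; omega)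
            (by simp only [Fin.val_mk]; omega) 0 hb,
          if_neg (by simp only [Fin.val_mk]; omega), if_pos (by simp only [Fin.val_mk]; omega)]
        decide
      · rw [hb', hb, sqDelta_mid_apply m hm x _ (by simp only [Fin.val_mk]; omega)
            (by simp only [Fin.val_mk]; omega) 0 hb,
          if_neg (by simp only [Fin.val_mk]; omega), if_neg (by simp only [Fin.val_mk]; omega)]
        decide
  · -- clause 5 : labels 0 → 1
    obtain ⟨rfl, rfl⟩ := lbl_inv0 a b (hp2.symm.trans h1)
    obtain ⟨rfl, rfl⟩ := lbl_inv1 a' b' (hq2.symm.trans h2)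
    refine ⟨⟨m + 1, by omega⟩, build m x y _ (fun k => ?_) ?_ ?_⟩
    · rw [eq_pw m x y hd k, sqDelta_hi_apply m x _ (by simp only [Fin.val_mk]; omega),
        if_neg (by simp only [Fin.coe_castLE, Fin.val_mk]; omega)]
      ring
    · rw [ha', ha, sqDelta_hi_apply m x _ (by simp only [Fin.val_mk]; omega),
        if_neg (by simp only [Fin.val_mk]; omega)]
      decide
    · rw [hb', hb, sqDelta_hi_apply m x _ (by simp only [Fin.val_mk]; omega),
        if_pos (by simp only [Fin.val_mk])]
      decide
  · -- clause 6 : labels 0 → 3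
    obtain ⟨rfl, rfl⟩ := lbl_inv0 a b (hp2.symm.trans h1)
    obtain ⟨rfl, rfl⟩ := lbl_inv3 a' b' (hq2.symm.trans h2)
    refine ⟨⟨m, by omega⟩, build m x y _ (fun k => ?_) ?_ ?_⟩
    · rw [eq_pw m x y hd k, sqDelta_hi_apply m x _ (by simp only [Fin.val_mk]; omega),
        if_neg (by simp only [Fin.coe_castLE, Fin.val_mk]; omega)]
      ring
    · rw [ha', ha, sqDelta_hi_apply m x _ (by simp only [Fin.val_mk]; omega),
        if_pos (by simp only [Fin.val_mk])]
      decide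
    · rw [hb', hb, sqDelta_hi_apply m x _ (by simp only [Fin.val_mk]; omega),
        if_neg (by simp only [Fin.val_mk]; omega)]
      decide
  · -- clause 7 : labels 2 → 3
    obtain ⟨rfl, rfl⟩ := lbl_inv2 a b (hp2.symm.trans h1)
    obtain ⟨rfl, rfl⟩ := lbl_inv3 a' b' (hq2.symm.trans h2)
    refine ⟨⟨m + 1, by omega⟩, build m x y _ (fun k => ?_) ?_ ?_⟩
    · rw [eq_pw m x y hd k, sqDelta_hi_apply m x _ (by simp only [Fin.val_mk]; omega),
        if_neg (by simp only [Fin.coe_castLE, Fin.val_mk]; omega)]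
      ring
    · rw [ha', ha, sqDelta_hi_apply m x _ (by simp only [Fin.val_mk]; omega),
        if_neg (by simp only [Fin.val_mk]; omega)]
      decide
    · rw [hb', hb, sqDelta_hi_apply m x _ (by simp only [Fin.val_mk]; omega),
        if_pos (by simp only [Fin.val_mk])]
      decide
  · -- clause 8 : labels 1 → 2
    obtain ⟨rfl, rfl⟩ := lbl_inv1 a b (hp2.symm.trans h1)
    obtain ⟨rfl, rfl⟩ := lbl_inv2 a' b' (hq2.symm.trans h2)
    rcases hd with hd | hd
    · refine ⟨⟨m, by omega⟩, build m x y _ (fun k => ?_) ?_ ?_⟩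
      · rw [eq_pw m x y hd k, sqDelta_hi_apply m x _ (by simp only [Fin.val_mk]; omega),
          if_neg (by simp only [Fin.coe_castLE, Fin.val_mk]; omega)]
        ring
      · rw [ha', ha, sqDelta_hi_apply m x _ (by simp only [Fin.val_mk]; omega),
          if_pos (by simp only [Fin.val_mk])]
        decide
      · rw [hb', hb, sqDelta_hi_apply m x _ (by simp only [Fin.val_mk]; omega),
          if_neg (by simp only [Fin.val_mk]; omega)]
        decide
    · refine ⟨⟨m - 1, by omega⟩, build m x y _ (fun k => ?_) ?_ ?_⟩
      · rw [diff_pw m x y _ hd k,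
          sqDelta_mid_apply m hm x _ (by simp only [Fin.val_mk]; omega)
            (by simp only [Fin.val_mk]; omega) 1 hb]
        congr 1
        simp only [Fin.coe_castLE, Fin.val_mk, Pi.single_apply, Fin.ext_iff]
        all_goals split_ifs <;> first | omega | decide
      · rw [ha', ha, sqDelta_mid_apply m hm x _ (by simp only [Fin.val_mk]; omega)
            (by simp only [Fin.val_mk]; omega) 1 hb,
          if_neg (by simp only [Fin.val_mk]; omega), if_pos (by simp only [Fin.val_mk]; omega)]
        decide
      · rw [hb', hb, sqDelta_mid_apply m hm x _ (by simp only [Fin.val_mk]; omega)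
            (by simp only [Fin.val_mk]; omega) 1 hb,
          if_neg (by simp only [Fin.val_mk]; omega), if_neg (by simp only [Fin.val_mk]; omega)]
        decide

end SCI

namespace SCI

lemma main_iff (m : ℕ) (hm : 4 ≤ m) (x y : Fin (m+2) → ZMod 2) :
    (gammaGraph m hm).Adj (phi m x) (phi m y) ↔ (spinedCube (m+2)).Adj x y := by
  have gadj : (gammaGraph m hm).Adj (phi m x) (phi m y) ↔
      phi m x ≠ phi m y ∧ (gRel m hm (phi m x) (phi m y) ∨ gRel m hm (phi m y) (phi m x)) :=
    Iff.rfl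
  have sadj : (spinedCube (m+2)).Adj x y ↔
      x ≠ y ∧ ((∃ i, y = x + sqDelta (m+2) x i) ∨ (∃ i, x = y + sqDelta (m+2) y i)) := Iff.rfl
  rw [gadj, sadj]
  constructor
  · rintro ⟨hne, hg | hg⟩
    · exact ⟨fun e => hne (by rw [e]), Or.inl (backward m hm x y hg)⟩
    · exact ⟨fun e => hne (by rw [e]), Or.inr (backward m hm y x hg)⟩
  · rintro ⟨hne, ⟨i, rfl⟩ | ⟨i, rfl⟩⟩
    · exact ⟨fun e => hne ((eqv m).injective e), forward m hm x i⟩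
    · exact ⟨fun e => hne ((eqv m).injective e), Or.symm (forward m hm y i)⟩

end SCI

/-- For `n ≥ 6`, the explicit map `x₁⋯x_{n-2}00 ↦ (x,1)`, `x₁⋯x_{n-2}01 ↦ (x,2)`,
`x₁⋯x_{n-2}11 ↦ (x,3)`, `x₁⋯x_{n-2}10 ↦ (x,4)` (labels shifted to `0,1,2,3`) is a
graph isomorphism from `SQ_n` to the 4-Cayley graph `Γ_n`. -/
theorem spinedCube_iso_gammaGraph (n : ℕ) (hn : 6 ≤ n) :
    ∃ e : spinedCube n ≃g gammaGraph (n - 2) (by omega),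
      ∀ x : Fin n → ZMod 2,
        e x = (fun i : Fin (n - 2) => x (Fin.castLE (by omega) i),
          if x ⟨n - 2, by omega⟩ = 0 then
            (if x ⟨n - 1, by omega⟩ = 0 then (0 : Fin 4) else 1)
          else
            (if x ⟨n - 1, by omega⟩ = 0 then 3 else 2)) := by
  obtain ⟨m, rfl⟩ : ∃ m, n = m + 2 := ⟨n - 2, by omega⟩
  have hm : 4 ≤ m := by omega
  refine ⟨⟨SCI.eqv m, @fun x y => ?_⟩, fun x => rfl⟩
  exact SCI.main_iff m hm x y
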